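/- Let μ₀ = (−59+√17481)/14 and let G(μ,ε) = a₁(μ,ε)a₂(μ,ε) − a₃(μ,ε), where X³ + a₁X² + a₂X + a₃ is the characteristic polynomial of J₁(μ,ε) = [[−2, 0, 3], [−10/3 + εd₁, −μ + εd₂, 0], [10/3, 50 − μ + εd₂, −5 − εx₀]], with d₁ = 10μ(μ−50)/(25+3εμ²), d₂ = 3μ²(μ−50)/(25+3εμ²), x₀ = 15μ(50−μ)/(25+3εμ²). Then there exist ε̄ > 0 and a continuously differentiable function μ : (−ε̄, ε̄) → ℝ with μ(0) = μ₀ such that G(μ(ε), ε) = 0 for all |ε| < ε̄; moreover, for all sufficiently small |ε|, a₂(μ(ε),ε) > 0, and hence the matrix J₁(μ(ε),ε) has a pair of purely imaginary complex-conjugate eigenvalues ±iω(ε) with ω(ε) = √(a₂(μ(ε),ε)) and ω(0) = √(7μ₀). -/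

import Mathlib

open Polynomial Matrix

/-- The reduced Jacobian `J₁(μ,ε)`. -/
noncomputable def J1 (μ ε : ℝ) : Matrix (Fin 3) (Fin 3) ℝ :=
  !![-2, 0, 3;
     -10/3 + ε * (10 * μ * (μ - 50) / (25 + 3 * ε * μ ^ 2)),
       -μ + ε * (3 * μ ^ 2 * (μ - 50) / (25 + 3 * ε * μ ^ 2)), 0;
     10/3, 50 - μ + ε * (3 * μ ^ 2 * (μ - 50) / (25 + 3 * ε * μ ^ 2)),
       -5 - ε * (15 * μ * (50 - μ) / (25 + 3 * ε * μ ^ 2))]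

/-- The coefficient `a₂(μ,ε)` of the characteristic polynomial
`X³ + a₁X² + a₂X + a₃` of `J₁(μ,ε)`. -/
noncomputable def a2 (μ ε : ℝ) : ℝ := (J1 μ ε).charpoly.coeff 1

/-- The Routh–Hurwitz quantity `G(μ,ε) = a₁a₂ − a₃`. -/
noncomputable def Gfun (μ ε : ℝ) : ℝ :=
  (J1 μ ε).charpoly.coeff 2 * (J1 μ ε).charpoly.coeff 1 - (J1 μ ε).charpoly.coeff 0

/-! ### Auxiliary algebraic lemmas -/

lemma charpoly_gen (p q r s t u : ℝ) :
    (!![p,0,3; r,q,0; s,t,u] : Matrix (Fin 3) (Fin 3) ℝ).charpoly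
      = X^3 + C (-(p+q+u)) * X^2 + C (p*q+p*u+q*u-3*s) * X
        + C (-(p*q*u) - 3*(r*t - s*q)) := by
  rw [Matrix.charpoly, Matrix.det_fin_three]
  simp only [charmatrix_apply, Matrix.diagonal_apply, Matrix.of_apply, Matrix.cons_val',
    Matrix.cons_val_zero, Matrix.cons_val_one, Matrix.head_cons, Matrix.head_fin_const,
    Matrix.empty_val', Matrix.cons_val_fin_one, Matrix.cons_val_two, Matrix.tail_cons,
    Fin.isValue, Fin.reduceEq, if_true, if_false, ite_true, ite_false, reduceIte]
  simp only [map_add, _root_.map_mul, map_sub, map_neg, map_ofNat, map_zero, Polynomial.C_0]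
  ring

noncomputable def e21 (μ ε : ℝ) : ℝ := -10/3 + ε * (10 * μ * (μ - 50) / (25 + 3 * ε * μ ^ 2))
noncomputable def e22 (μ ε : ℝ) : ℝ := -μ + ε * (3 * μ ^ 2 * (μ - 50) / (25 + 3 * ε * μ ^ 2))
noncomputable def e32 (μ ε : ℝ) : ℝ := 50 - μ + ε * (3 * μ ^ 2 * (μ - 50) / (25 + 3 * ε * μ ^ 2))
noncomputable def e33 (μ ε : ℝ) : ℝ := -5 - ε * (15 * μ * (50 - μ) / (25 + 3 * ε * μ ^ 2))

lemma J1_eq (μ ε : ℝ) :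
    J1 μ ε = !![-2, 0, 3; e21 μ ε, e22 μ ε, 0; 10/3, e32 μ ε, e33 μ ε] := rfl

noncomputable def A1 (μ ε : ℝ) : ℝ := -(-2 + e22 μ ε + e33 μ ε)
noncomputable def A2f (μ ε : ℝ) : ℝ :=
  (-2)*e22 μ ε + (-2)*e33 μ ε + e22 μ ε * e33 μ ε - 3*(10/3)
noncomputable def A3 (μ ε : ℝ) : ℝ :=
  -((-2)*e22 μ ε*e33 μ ε) - 3*(e21 μ ε * e32 μ ε - (10/3)*e22 μ ε)

lemma charpoly_J1 (μ ε : ℝ) :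
    (J1 μ ε).charpoly
      = X^3 + C (A1 μ ε) * X^2 + C (A2f μ ε) * X + C (A3 μ ε) := by
  rw [J1_eq, charpoly_gen]; rfl

lemma a2_eq (μ ε : ℝ) : a2 μ ε = A2f μ ε := by
  rw [a2, charpoly_J1]
  simp [coeff_add, coeff_C_mul, coeff_X_pow, coeff_C, coeff_X]

lemma Gfun_eq (μ ε : ℝ) : Gfun μ ε = A1 μ ε * A2f μ ε - A3 μ ε := by
  rw [Gfun, charpoly_J1]
  simp [coeff_add, coeff_C_mul, coeff_X_pow, coeff_C, coeff_X]

lemma a2_slice (t : ℝ) : a2 t 0 = 7*t := by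
  rw [a2_eq]; simp only [A2f, e22, e33]; norm_num; ring

noncomputable def gg (p : ℝ × ℝ) : ℝ := A1 p.1 p.2 * A2f p.1 p.2 - A3 p.1 p.2

lemma gg_contDiffAt (a : ℝ × ℝ) (h : 25 + 3 * a.2 * a.1 ^ 2 ≠ 0) :
    ContDiffAt ℝ 1 gg a := by
  unfold gg A1 A2f A3 e21 e22 e32 e33
  fun_prop (disch := assumption)

lemma A2f_continuousAt (a : ℝ × ℝ) (h : 25 + 3 * a.2 * a.1 ^ 2 ≠ 0) :
    ContinuousAt (fun p : ℝ × ℝ => A2f p.1 p.2) a := by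
  unfold A2f e22 e33
  fun_prop (disch := assumption)

lemma spec_helper (q r t u : ℝ) (z : ℂ)
    (hG : (-(-2+q+u)) * ((-2)*q+(-2)*u+q*u-3*(10/3)) -
      (-((-2)*q*u) - 3*(r*t - (10/3)*q)) = 0)
    (hz : z^2 = -((((-2)*q+(-2)*u+q*u-3*(10/3) : ℝ)) : ℂ)) :
    z ∈ spectrum ℂ ((!![(-2:ℝ),0,3; r,q,0; 10/3,t,u]).map (Complex.ofReal)) := by
  rw [spectrum.mem_iff]
  intro hunit
  rw [Matrix.isUnit_iff_isUnit_det, isUnit_iff_ne_zero] at hunit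
  apply hunit
  rw [Matrix.det_fin_three]
  simp only [Matrix.sub_apply, Matrix.map_apply, Matrix.algebraMap_matrix_apply,
    Matrix.of_apply, Matrix.cons_val', Matrix.cons_val_zero, Matrix.cons_val_one,
    Matrix.head_cons, Matrix.head_fin_const, Matrix.empty_val', Matrix.cons_val_fin_one,
    Matrix.cons_val_two, Matrix.tail_cons, Fin.isValue, Fin.reduceEq, if_true, if_false,
    ite_true, ite_false, reduceIte, Algebra.algebraMap_self_apply]
  have hG' : ((-(-2+q+u) : ℝ) : ℂ) * (((-2)*q+(-2)*u+q*u-3*(10/3) : ℝ) : ℂ) -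
      ((-((-2)*q*u) - 3*(r*t - (10/3)*q) : ℝ) : ℂ) = 0 := by exact_mod_cast hG
  push_cast at hG' hz ⊢
  linear_combination (z + (-(-2+(q:ℂ)+u))) * hz - hG'

set_option maxHeartbeats 2000000 in
theorem stmt_8 :
    ∃ εb > (0 : ℝ), ∃ μf : ℝ → ℝ,
      ContDiffOn ℝ 1 μf (Set.Ioo (-εb) εb) ∧
      μf 0 = (-59 + Real.sqrt 17481) / 14 ∧
      (∀ ε ∈ Set.Ioo (-εb) εb, Gfun (μf ε) ε = 0) ∧
      Real.sqrt (a2 (μf 0) 0) = Real.sqrt (7 * ((-59 + Real.sqrt 17481) / 14)) ∧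
      ∃ εc > (0 : ℝ), εc ≤ εb ∧ ∀ ε ∈ Set.Ioo (-εc) εc,
        0 < a2 (μf ε) ε ∧
        (Complex.I * (Real.sqrt (a2 (μf ε) ε) : ℂ)) ∈
          spectrum ℂ ((J1 (μf ε) ε).map Complex.ofReal) ∧
        (-(Complex.I * (Real.sqrt (a2 (μf ε) ε) : ℂ))) ∈
          spectrum ℂ ((J1 (μf ε) ε).map Complex.ofReal) := by
  have hs2 : Real.sqrt 17481 ^ 2 = 17481 := Real.sq_sqrt (by norm_num)
  have hs_gt : (59:ℝ) < Real.sqrt 17481 := by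
    nlinarith [Real.sqrt_nonneg (17481:ℝ)]
  set s : ℝ := Real.sqrt 17481 with hsdef
  set μ₀ : ℝ := (-59 + s)/14 with hμ₀
  have hμ₀pos : 0 < μ₀ := by rw [hμ₀]; linarith
  -- derivative data for gg
  have hgC : ContDiffAt ℝ 1 gg (μ₀, 0) := gg_contDiffAt _ (by norm_num)
  have hgd : DifferentiableAt ℝ gg (μ₀, 0) := hgC.differentiableAt one_ne_zero
  set Lg := fderiv ℝ gg (μ₀, 0) with hLgdef
  have hLgH : HasFDerivAt gg Lg (μ₀, 0) := hgd.hasFDerivAt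
  set A := Lg (1, 0) with hAdef
  set B := Lg (0, 1) with hBdef
  have hline : HasDerivAt (fun t : ℝ => gg (t, 0)) A μ₀ := by
    have h1 : HasDerivAt (fun t : ℝ => ((t, 0) : ℝ × ℝ)) ((1:ℝ), (0:ℝ)) μ₀ :=
      (hasDerivAt_id μ₀).prodMk (hasDerivAt_const μ₀ 0)
    exact hLgH.comp_hasDerivAt μ₀ h1
  have hslice : (fun t : ℝ => gg (t, 0)) = fun t : ℝ => 7*t^2 + 59*t - 500 := by
    funext t
    simp only [gg, A1, A2f, A3, e21, e22, e32, e33]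
    norm_num; ring
  have hpoly : HasDerivAt (fun t : ℝ => gg (t, 0)) (14*μ₀ + 59) μ₀ := by
    rw [hslice]
    have h1 := (hasDerivAt_pow 2 μ₀).const_mul (7:ℝ)
    have h2 := (hasDerivAt_id μ₀).const_mul (59:ℝ)
    have h3 := (h1.add h2).sub_const (500:ℝ)
    refine h3.congr_deriv ?_
    push_cast; ring
  have hA : A = 14*μ₀ + 59 := hline.unique hpoly
  have hAne : A ≠ 0 := by
    rw [hA, hμ₀]; intro h; nlinarith
  have hdecomp : ∀ p : ℝ × ℝ, Lg p = p.1 * A + p.2 * B := by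
    intro p
    have hp : p = p.1 • ((1:ℝ), (0:ℝ)) + p.2 • ((0:ℝ), (1:ℝ)) := by
      simp [Prod.ext_iff]
    conv_lhs => rw [hp]
    rw [map_add, _root_.map_smul, _root_.map_smul]
    simp [smul_eq_mul, hAdef, hBdef]
  -- the derivative as an equivalence
  set L : ℝ × ℝ →L[ℝ] ℝ × ℝ := Lg.prod (ContinuousLinearMap.snd ℝ ℝ ℝ) with hLdef
  set invL : ℝ × ℝ →L[ℝ] ℝ × ℝ :=
    ((A⁻¹) • (ContinuousLinearMap.fst ℝ ℝ ℝ - B • ContinuousLinearMap.snd ℝ ℝ ℝ)).prod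
      (ContinuousLinearMap.snd ℝ ℝ ℝ) with hinvLdef
  have h1 : Function.LeftInverse invL L := by
    intro p
    simp [hinvLdef, hLdef, ContinuousLinearMap.prod_apply, hdecomp p, Prod.ext_iff]
    field_simp
    ring
  have h2 : Function.RightInverse invL L := by
    intro q
    simp only [hinvLdef, hLdef, ContinuousLinearMap.prod_apply, Prod.ext_iff,
      ContinuousLinearMap.coe_sub', ContinuousLinearMap.coe_smul',
      ContinuousLinearMap.coe_fst', ContinuousLinearMap.coe_snd', Pi.smul_apply, Pi.sub_apply,
      smul_eq_mul]
    refine ⟨?_, trivial⟩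
    rw [hdecomp]
    field_simp
    ring
  set feq : (ℝ × ℝ) ≃L[ℝ] (ℝ × ℝ) := ContinuousLinearEquiv.equivOfInverse L invL h1 h2
    with hfeqdef
  -- Φ and its inverse
  set Φ : ℝ × ℝ → ℝ × ℝ := fun p => (gg p, p.2) with hΦdef
  have hΦC : ContDiffAt ℝ 1 Φ (μ₀, 0) := hgC.prodMk contDiffAt_snd
  have hΦd : HasFDerivAt Φ (feq : (ℝ × ℝ) →L[ℝ] (ℝ × ℝ)) (μ₀, 0) := by
    have : HasFDerivAt Φ L (μ₀, 0) := hLgH.prodMk hasFDerivAt_snd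
    exact this
  set inv : ℝ × ℝ → ℝ × ℝ := hΦC.localInverse hΦd one_ne_zero with hinvdef
  have hΦa : Φ (μ₀, 0) = (0, 0) := by
    have hgval : gg (μ₀, 0) = 0 := by
      have : gg (μ₀, 0) = 7*μ₀^2 + 59*μ₀ - 500 := congrFun hslice μ₀
      rw [this, hμ₀]
      field_simp
      nlinarith [hs2]
    simp [hΦdef, hgval]
  have hinv0 : inv (0, 0) = (μ₀, 0) := by
    rw [hinvdef, ← hΦa]
    exact hΦC.localInverse_apply_image hΦd one_ne_zero
  have hinvC : ContDiffAt ℝ 1 inv (0, 0) := by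
    have := hΦC.to_localInverse hΦd one_ne_zero
    rwa [hΦa] at this
  have hrinv : ∀ᶠ y in nhds ((0:ℝ), (0:ℝ)), Φ (inv y) = y := by
    have := (hΦC.hasStrictFDerivAt' hΦd one_ne_zero).eventually_right_inverse
    rwa [hΦa] at this
  -- the curve
  set μf : ℝ → ℝ := fun ε => (inv (0, ε)).1 with hμfdef
  have hμf0 : μf 0 = μ₀ := by
    have h00 : inv 0 = (μ₀, 0) := hinv0
    rw [hμfdef]; simp [h00, hinv0]
  have hμfC : ContDiffAt ℝ 1 μf 0 := by
    have hemb : ContDiffAt ℝ 1 (fun ε : ℝ => (((0:ℝ), ε) : ℝ × ℝ)) 0 :=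
      (contDiff_const.prodMk contDiff_id).contDiffAt
    have hcomp : ContDiffAt ℝ 1 (fun ε : ℝ => inv (0, ε)) 0 := hinvC.comp 0 hemb
    exact (contDiff_fst.contDiffAt).comp 0 hcomp
  obtain ⟨u, hu_nhds, huC⟩ := hμfC.contDiffOn le_rfl (by simp)
  have hto : Filter.Tendsto (fun ε : ℝ => (((0:ℝ), ε) : ℝ × ℝ)) (nhds 0)
      (nhds ((0:ℝ), (0:ℝ))) := by
    have : Continuous (fun ε : ℝ => (((0:ℝ), ε) : ℝ × ℝ)) :=
      continuous_const.prodMk continuous_id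
    simpa using this.tendsto 0
  have hev1 : ∀ᶠ ε in nhds (0:ℝ), Φ (inv (0, ε)) = ((0:ℝ), ε) := hto.eventually hrinv
  -- a2 positivity eventually
  have ha2C : ContinuousAt (fun ε => a2 (μf ε) ε) 0 := by
    have hA2 : ContinuousAt (fun p : ℝ × ℝ => A2f p.1 p.2) (μ₀, 0) :=
      A2f_continuousAt _ (by norm_num)
    have hcurve : ContinuousAt (fun ε : ℝ => ((μf ε, ε) : ℝ × ℝ)) 0 :=
      hμfC.continuousAt.prodMk continuousAt_id
    have : ContinuousAt (fun ε : ℝ => A2f (μf ε) ε) 0 := by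
      have hA2' : ContinuousAt (fun p : ℝ × ℝ => A2f p.1 p.2) ((μf 0, 0) : ℝ × ℝ) := by
        rwa [hμf0]
      have := ContinuousAt.comp (f := fun ε : ℝ => ((μf ε, ε) : ℝ × ℝ)) hA2' hcurve
      exact this
    simpa only [a2_eq] using this
  have hpos0 : (0:ℝ) < a2 (μf 0) 0 := by
    rw [hμf0, a2_slice]; linarith
  have hev2 : ∀ᶠ ε in nhds (0:ℝ), 0 < a2 (μf ε) ε := by
    have := ha2C (Ioi_mem_nhds hpos0)
    exact this
  -- choose εb
  have hmem : (u ∩ {ε : ℝ | Φ (inv (0, ε)) = ((0:ℝ), ε)}) ∈ nhds (0:ℝ) :=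
    Filter.inter_mem hu_nhds hev1
  obtain ⟨εb, hεb_pos, hεb_sub⟩ := Metric.mem_nhds_iff.1 hmem
  obtain ⟨εc', hεc'_pos, hεc'_sub⟩ := Metric.mem_nhds_iff.1 hev2
  refine ⟨εb, hεb_pos, μf, ?_, ?_, ?_, ?_, ?_⟩
  · -- ContDiffOn
    apply huC.mono
    intro x hx
    have : x ∈ Metric.ball (0:ℝ) εb := by
      rw [Real.ball_eq_Ioo]; simpa using hx
    exact (hεb_sub this).1
  · rw [hμf0, hμ₀]
  · -- G = 0
    intro ε hε
    have hball : ε ∈ Metric.ball (0:ℝ) εb := by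
      rw [Real.ball_eq_Ioo]; simpa using hε
    have hΦε := (hεb_sub hball).2
    have hg0 : gg (inv (0, ε)) = 0 ∧ (inv (0, ε)).2 = ε := by
      have := hΦε
      rw [hΦdef] at this
      exact ⟨congrArg Prod.fst this, congrArg Prod.snd this⟩
    have : Gfun (μf ε) ((inv (0, ε)).2) = 0 := by
      rw [Gfun_eq]
      have := hg0.1
      rw [gg] at this
      exact this
    rwa [hg0.2] at this
  · rw [hμf0, a2_slice, hμ₀]
  · -- εc part
    refine ⟨min εb εc', lt_min hεb_pos hεc'_pos, min_le_left _ _, ?_⟩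
    intro ε hε
    obtain ⟨hεl, hεr⟩ := hε
    have hminb := min_le_left εb εc'
    have hminc := min_le_right εb εc'
    have hε_b : ε ∈ Set.Ioo (-εb) εb := ⟨by linarith, by linarith⟩
    have hε_c : ε ∈ Metric.ball (0:ℝ) εc' := by
      rw [Real.ball_eq_Ioo]
      exact ⟨by simpa using by linarith, by simpa using by linarith⟩
    have hpos : 0 < a2 (μf ε) ε := by
      have := hεc'_sub hε_c
      simpa using this
    -- G = 0 at this ε
    have hG0 : Gfun (μf ε) ε = 0 := by
      have hball : ε ∈ Metric.ball (0:ℝ) εb := by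
        rw [Real.ball_eq_Ioo]; simpa using hε_b
      have hΦε := (hεb_sub hball).2
      rw [hΦdef] at hΦε
      have h1 := congrArg Prod.fst hΦε
      have h2 := congrArg Prod.snd hΦε
      simp only at h1 h2
      have : Gfun (μf ε) ((inv (0, ε)).2) = 0 := by
        rw [Gfun_eq]; exact h1
      rwa [h2] at this
    have hsq : ((Real.sqrt (a2 (μf ε) ε) : ℝ) : ℂ)^2 = ((a2 (μf ε) ε : ℝ) : ℂ) := by
      norm_cast
      exact Real.sq_sqrt hpos.le
    have ha2A : a2 (μf ε) ε = A2f (μf ε) ε := a2_eq _ _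
    have hGA : -(-2 + e22 (μf ε) ε + e33 (μf ε) ε) *
        ((-2)*e22 (μf ε) ε + (-2)*e33 (μf ε) ε + e22 (μf ε) ε * e33 (μf ε) ε - 3*(10/3)) -
        (-((-2)*e22 (μf ε) ε*e33 (μf ε) ε) -
          3*(e21 (μf ε) ε * e32 (μf ε) ε - (10/3)*e22 (μf ε) ε)) = 0 := by
      rw [Gfun_eq] at hG0
      simpa only [A1, A2f, A3] using hG0
    have hzsq : (Complex.I * (Real.sqrt (a2 (μf ε) ε) : ℂ))^2 =
        -((((-2)*e22 (μf ε) ε + (-2)*e33 (μf ε) ε + e22 (μf ε) ε * e33 (μf ε) ε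
          - 3*(10/3) : ℝ)) : ℂ) := by
      rw [mul_pow, Complex.I_sq, hsq, ha2A]
      simp only [A2f]
      ring
    refine ⟨hpos, ?_, ?_⟩
    · rw [J1_eq]
      exact spec_helper _ _ _ _ _ hGA hzsq
    · rw [J1_eq]
      refine spec_helper _ _ _ _ _ hGA ?_
      rw [neg_pow]
      simpa using hzsq
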